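/- Viewing L¹(A) as a closed Riesz subspace of (L^∞(A))* via the pairing ⟨f, g⟩ = ∫ fg dμ on a semi-finite measure space (A, 𝒜, μ), L¹(A) is an order ideal in the Banach lattice (L^∞(A))*: if Λ ∈ (L^∞(A))* and f ∈ L¹(A) satisfy 0 ≤ Λ ≤ f (as functionals), then Λ is represented by an L¹ function. -/

import Mathlib

open MeasureTheory ENNReal NNReal Filter Topology

/-- A measure is semi-finite if every measurable set of positive measure has a
measurable subset of finite positive measure. -/
def SemiFinite {α : Type*} [MeasurableSpace α] (μ : Measure α) : Prop :=
  ∀ s : Set α, MeasurableSet s → 0 < μ s →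
    ∃ t : Set α, t ⊆ s ∧ MeasurableSet t ∧ 0 < μ t ∧ μ t < ⊤


namespace L1Ideal
variable {α : Type*} [MeasurableSpace α] {μ : Measure α}

/-- indicator of a measurable set as an element of `L^∞`. -/
noncomputable def indL (μ : Measure α) (s : Set α) (hs : MeasurableSet s) : Lp ℝ ⊤ μ :=
  (MemLp.indicator hs (memLp_top_const (1:ℝ))).toLp _

lemma indL_coe {s : Set α} (hs : MeasurableSet s) :
    indL μ s hs =ᵐ[μ] s.indicator (fun _ => (1:ℝ)) := MemLp.coeFn_toLp _

lemma indL_nonneg {s : Set α} (hs : MeasurableSet s) : 0 ≤ indL μ s hs := by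
  rw [← Lp.coeFn_nonneg]
  filter_upwards [indL_coe (μ := μ) hs] with a ha
  rw [ha]
  exact Set.indicator_nonneg (fun _ _ => zero_le_one) a

lemma indicator_split {E : ℕ → Set α} (hd : Pairwise (Function.onFun Disjoint E)) (N : ℕ)
    (x : α) :
    Set.indicator (⋃ i, E i) (fun _ => (1:ℝ)) x =
      (∑ i ∈ Finset.range N, Set.indicator (E i) (fun _ => (1:ℝ)) x) +
        Set.indicator (⋃ i, E (N + i)) (fun _ => (1:ℝ)) x := by
  by_cases hx : x ∈ ⋃ i, E i
  · obtain ⟨j, hj⟩ := Set.mem_iUnion.mp hx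
    rw [Set.indicator_of_mem hx]
    have honly : ∀ i, i ≠ j → x ∉ E i := fun i hij hxi =>
      Set.disjoint_left.mp (hd hij) hxi hj
    by_cases hjN : j < N
    · have hsum : (∑ i ∈ Finset.range N, Set.indicator (E i) (fun _ => (1:ℝ)) x) = 1 := by
        rw [Finset.sum_eq_single_of_mem j (Finset.mem_range.mpr hjN)]
        · exact Set.indicator_of_mem hj _
        · intro i _ hij
          exact Set.indicator_of_notMem (honly i hij) _
      have htail : x ∉ ⋃ i, E (N + i) := by
        rw [Set.mem_iUnion]
        rintro ⟨i, hxi⟩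
        exact honly (N + i) (by omega) hxi
      rw [hsum, Set.indicator_of_notMem htail]; ring
    · have hsum : (∑ i ∈ Finset.range N, Set.indicator (E i) (fun _ => (1:ℝ)) x) = 0 := by
        apply Finset.sum_eq_zero
        intro i hi
        exact Set.indicator_of_notMem (honly i (by simp at hi; omega)) _
      have htail : x ∈ ⋃ i, E (N + i) :=
        Set.mem_iUnion.mpr ⟨j - N, by rwa [Nat.add_sub_cancel' (not_lt.mp hjN)]⟩
      rw [hsum, Set.indicator_of_mem htail]; ring
  · have h1 : ∀ i, x ∉ E i := fun i hxi => hx (Set.mem_iUnion.mpr ⟨i, hxi⟩)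
    rw [Set.indicator_of_notMem hx, Set.indicator_of_notMem
      (by rw [Set.mem_iUnion]; rintro ⟨i, hxi⟩; exact h1 _ hxi),
      Finset.sum_eq_zero fun i _ => Set.indicator_of_notMem (h1 i) _]
    ring

lemma coeFn_finset_sum {ι : Type*} (s : Finset ι) (F : ι → Lp ℝ ⊤ μ) :
    ⇑(∑ i ∈ s, F i) =ᵐ[μ] fun x => ∑ i ∈ s, F i x := by
  classical
  induction s using Finset.induction_on with
  | empty => simp only [Finset.sum_empty]; exact Lp.coeFn_zero ℝ ⊤ μ
  | insert _ _ hns ih =>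
    rename_i a s
    rw [Finset.sum_insert hns]
    filter_upwards [Lp.coeFn_add (F a) (∑ i ∈ s, F i), ih] with x hx1 hx2
    rw [hx1]
    simp only [Pi.add_apply]
    rw [hx2, Finset.sum_insert hns]

lemma indL_split {E : ℕ → Set α} (hE : ∀ i, MeasurableSet (E i))
    (hd : Pairwise (Function.onFun Disjoint E)) (N : ℕ) :
    indL μ (⋃ i, E i) (MeasurableSet.iUnion hE) =
      (∑ i ∈ Finset.range N, indL μ (E i) (hE i)) +
        indL μ (⋃ i, E (N + i)) (MeasurableSet.iUnion fun i => hE (N + i)) := by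
  apply Lp.ext
  have hs := coeFn_finset_sum (μ := μ) (Finset.range N) (fun i => indL μ (E i) (hE i))
  have hcoe : ∀ i, (indL μ (E i) (hE i) : α → ℝ) =ᵐ[μ] (E i).indicator (fun _ => (1:ℝ)) :=
    fun i => indL_coe _
  have hall : ∀ᵐ x ∂μ, ∀ i ∈ Finset.range N,
      (indL μ (E i) (hE i) : α → ℝ) x = (E i).indicator (fun _ => (1:ℝ)) x :=
    (ae_ball_iff (Finset.range N).countable_toSet).mpr fun i _ => hcoe i
  filter_upwards [indL_coe (μ := μ) (MeasurableSet.iUnion hE),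
    Lp.coeFn_add (∑ i ∈ Finset.range N, indL μ (E i) (hE i))
      (indL μ (⋃ i, E (N + i)) (MeasurableSet.iUnion fun i => hE (N + i))),
    hs, hall, indL_coe (μ := μ) (MeasurableSet.iUnion fun i => hE (N + i))]
    with x h1 h2 h3 h4 h5
  rw [h1, indicator_split hd N x, h2]
  simp only [Pi.add_apply]
  rw [h3, h5, Finset.sum_congr rfl h4]


variable {Λ : Lp ℝ ⊤ μ →L[ℝ] ℝ} {f : Lp ℝ 1 μ}

lemma abs_apply_le (hΛpos : ∀ g : Lp ℝ ⊤ μ, 0 ≤ g → 0 ≤ Λ g) (u : Lp ℝ ⊤ μ) :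
    |Λ u| ≤ Λ |u| := by
  have h1 : 0 ≤ Λ (|u| - u) := hΛpos _ (sub_nonneg.mpr (le_abs_self u))
  have h2 : 0 ≤ Λ (|u| + u) :=
    hΛpos _ (neg_le_iff_add_nonneg.mp (neg_le_abs u))
  rw [map_sub] at h1
  rw [map_add] at h2
  rw [abs_le]
  constructor <;> linarith

lemma abs_apply_le_int (hΛpos : ∀ g : Lp ℝ ⊤ μ, 0 ≤ g → 0 ≤ Λ g)
    (hΛle : ∀ g : Lp ℝ ⊤ μ, 0 ≤ g → Λ g ≤ ∫ a, f a * g a ∂μ) (u : Lp ℝ ⊤ μ) :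
    |Λ u| ≤ ∫ a, f a * |u a| ∂μ := by
  refine (abs_apply_le hΛpos u).trans ((hΛle _ (abs_nonneg u)).trans_eq ?_)
  refine integral_congr_ae ?_
  filter_upwards [Lp.coeFn_abs u] with a ha
  rw [ha]

lemma lam_ind_le (hΛle : ∀ g : Lp ℝ ⊤ μ, 0 ≤ g → Λ g ≤ ∫ a, f a * g a ∂μ)
    {s : Set α} (hs : MeasurableSet s) :
    Λ (indL μ s hs) ≤ (∫⁻ a in s, ‖f a‖₊ ∂μ).toReal := by
  have h1 : Λ (indL μ s hs) ≤ ∫ a, f a * (indL μ s hs) a ∂μ := hΛle _ (indL_nonneg hs)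
  have h2 : ∫ a, f a * (indL μ s hs) a ∂μ = ∫ a in s, f a ∂μ := by
    rw [← integral_indicator hs]
    refine integral_congr_ae ?_
    filter_upwards [indL_coe (μ := μ) hs] with a ha
    rw [ha]
    by_cases h : a ∈ s <;> simp [h]
  have hint : IntegrableOn (fun a => f a) s μ := (L1.integrable_coeFn f).integrableOn
  have h3 : ∫ a in s, f a ∂μ ≤ ∫ a in s, ‖f a‖ ∂μ :=
    integral_mono hint hint.norm fun a => le_abs_self _
  have h4 : ∫ a in s, ‖f a‖ ∂μ = (∫⁻ a in s, ‖f a‖₊ ∂μ).toReal :=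
    integral_norm_eq_lintegral_enorm (Lp.aestronglyMeasurable f).restrict
  linarith

lemma lam_ind_hasSum (hΛpos : ∀ g : Lp ℝ ⊤ μ, 0 ≤ g → 0 ≤ Λ g)
    (hΛle : ∀ g : Lp ℝ ⊤ μ, 0 ≤ g → Λ g ≤ ∫ a, f a * g a ∂μ)
    {E : ℕ → Set α} (hE : ∀ i, MeasurableSet (E i))
    (hd : Pairwise (Function.onFun Disjoint E)) :
    HasSum (fun i => Λ (indL μ (E i) (hE i)))
      (Λ (indL μ (⋃ i, E i) (MeasurableSet.iUnion hE))) := by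
  set a : ℕ → ℝ := fun i => Λ (indL μ (E i) (hE i)) with ha
  set S : ℝ := Λ (indL μ (⋃ i, E i) (MeasurableSet.iUnion hE)) with hS
  have ha_nonneg : ∀ i, 0 ≤ a i := fun i => hΛpos _ (indL_nonneg _)
  set b : ℕ → ℝ≥0∞ := fun i => ∫⁻ x in E i, ‖f x‖₊ ∂μ with hb
  have hb_tsum : ∑' i, b i ≠ ⊤ := by
    have h1 : ∑' i, b i = ∫⁻ x in ⋃ i, E i, ‖f x‖₊ ∂μ :=
      (lintegral_iUnion hE hd _).symm
    have h2 : ∫⁻ x in ⋃ i, E i, ‖f x‖₊ ∂μ ≤ ∫⁻ x, ‖f x‖₊ ∂μ :=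
      setLIntegral_le_lintegral _ _
    have h3 : ∫⁻ x, ‖f x‖₊ ∂μ < ⊤ := (L1.integrable_coeFn f).hasFiniteIntegral
    exact (h1 ▸ (h2.trans_lt h3)).ne
  have key : ∀ N, S = (∑ i ∈ Finset.range N, a i) +
      Λ (indL μ (⋃ i, E (N + i)) (MeasurableSet.iUnion fun i => hE (N + i))) := by
    intro N
    rw [hS, indL_split hE hd N, map_add, map_sum]
  have htail_nonneg : ∀ N, 0 ≤ Λ (indL μ (⋃ i, E (N + i))
      (MeasurableSet.iUnion fun i => hE (N + i))) := fun N => hΛpos _ (indL_nonneg _)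
  have htail_le : ∀ N, Λ (indL μ (⋃ i, E (N + i))
      (MeasurableSet.iUnion fun i => hE (N + i))) ≤ (∑' i, b (i + N)).toReal := by
    intro N
    refine (lam_ind_le hΛle _).trans ?_
    have hdis : Pairwise (Function.onFun Disjoint fun i => E (N + i)) := by
      intro i j hij
      exact hd (by omega)
    rw [lintegral_iUnion (fun i => hE (N + i)) hdis]
    apply ENNReal.toReal_mono
    · exact ((ENNReal.tsum_comp_le_tsum_of_injective
        (add_left_injective N) b).trans_lt
        (lt_top_iff_ne_top.mpr hb_tsum)).ne
    · exact le_of_eq (tsum_congr fun i => by rw [hb, Nat.add_comm N i])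
  have htt : Tendsto (fun N => (∑' i, b (i + N)).toReal) atTop (𝓝 0) := by
    have h0 : Tendsto (fun N => ∑' i, b (i + N)) atTop (𝓝 0) :=
      ENNReal.tendsto_sum_nat_add b hb_tsum
    have h1 := (ENNReal.tendsto_toReal (a := 0) (by simp)).comp h0
    exact h1
  have hT : Tendsto (fun N => Λ (indL μ (⋃ i, E (N + i))
      (MeasurableSet.iUnion fun i => hE (N + i)))) atTop (𝓝 0) :=
    squeeze_zero htail_nonneg htail_le htt
  have hpartial : Tendsto (fun N => ∑ i ∈ Finset.range N, a i) atTop (𝓝 S) := by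
    have heq : (fun N => ∑ i ∈ Finset.range N, a i) = fun N => S - Λ (indL μ (⋃ i, E (N + i))
        (MeasurableSet.iUnion fun i => hE (N + i))) := funext fun N => by rw [key N]; ring
    rw [heq]
    simpa using tendsto_const_nhds.sub hT
  exact (hasSum_iff_tendsto_nat_of_nonneg ha_nonneg S).mpr hpartial

variable (Λ f) in
/-- The measure `E ↦ Λ(1_E)`. -/
noncomputable def nu (hΛpos : ∀ g : Lp ℝ ⊤ μ, 0 ≤ g → 0 ≤ Λ g)
    (hΛle : ∀ g : Lp ℝ ⊤ μ, 0 ≤ g → Λ g ≤ ∫ a, f a * g a ∂μ) : Measure α :=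
  Measure.ofMeasurable (fun s hs => ENNReal.ofReal (Λ (indL μ s hs)))
    (by
      have : indL μ (∅ : Set α) MeasurableSet.empty = 0 := by
        apply Lp.ext
        filter_upwards [indL_coe (μ := μ) (MeasurableSet.empty (α := α)),
          Lp.coeFn_zero ℝ ⊤ μ] with x h1 h2
        rw [h1, h2, Set.indicator_empty]
        simp
      show ENNReal.ofReal (Λ (indL μ ∅ MeasurableSet.empty)) = 0
      rw [this, map_zero, ENNReal.ofReal_zero])
    (by
      intro E hE hd
      have hs := lam_ind_hasSum hΛpos hΛle hE hd
      show ENNReal.ofReal (Λ (indL μ (⋃ i, E i) (MeasurableSet.iUnion hE))) =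
        ∑' i, ENNReal.ofReal (Λ (indL μ (E i) (hE i)))
      rw [← hs.tsum_eq]
      exact ENNReal.ofReal_tsum_of_nonneg (fun i => hΛpos _ (indL_nonneg _)) hs.summable)

lemma nu_apply (hΛpos : ∀ g : Lp ℝ ⊤ μ, 0 ≤ g → 0 ≤ Λ g)
    (hΛle : ∀ g : Lp ℝ ⊤ μ, 0 ≤ g → Λ g ≤ ∫ a, f a * g a ∂μ)
    {s : Set α} (hs : MeasurableSet s) :
    nu Λ f hΛpos hΛle s = ENNReal.ofReal (Λ (indL μ s hs)) :=
  Measure.ofMeasurable_apply s hs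

lemma nu_le (hΛpos : ∀ g : Lp ℝ ⊤ μ, 0 ≤ g → 0 ≤ Λ g)
    (hΛle : ∀ g : Lp ℝ ⊤ μ, 0 ≤ g → Λ g ≤ ∫ a, f a * g a ∂μ)
    {s : Set α} (hs : MeasurableSet s) :
    nu Λ f hΛpos hΛle s ≤ ∫⁻ a in s, ‖f a‖₊ ∂μ := by
  rw [nu_apply hΛpos hΛle hs]
  exact ENNReal.ofReal_le_of_le_toReal (lam_ind_le hΛle hs)

lemma exists_density (hΛpos : ∀ g : Lp ℝ ⊤ μ, 0 ≤ g → 0 ≤ Λ g)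
    (hΛle : ∀ g : Lp ℝ ⊤ μ, 0 ≤ g → Λ g ≤ ∫ a, f a * g a ∂μ) :
    ∃ h₀ : α → ℝ, Integrable h₀ μ ∧ (∀ x, 0 ≤ h₀ x) ∧
      ∀ s : Set α, ∀ hs : MeasurableSet s, Λ (indL μ s hs) = ∫ a in s, h₀ a ∂μ := by
  set ν := nu Λ f hΛpos hΛle with hν
  set ν₀ := μ.withDensity (fun a => (‖f a‖₊ : ℝ≥0∞)) with hν₀
  have hf_meas : AEMeasurable (fun a => (‖f a‖₊ : ℝ≥0∞)) μ :=
    (Lp.aestronglyMeasurable f).enorm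
  have hf_fin : ∫⁻ a, (‖f a‖₊ : ℝ≥0∞) ∂μ < ⊤ := (L1.integrable_coeFn f).hasFiniteIntegral
  haveI hfin0 : IsFiniteMeasure ν₀ := by
    constructor
    rw [hν₀, withDensity_apply _ MeasurableSet.univ, setLIntegral_univ]
    exact hf_fin
  have hle : ν ≤ ν₀ := by
    refine Measure.le_iff.mpr fun s hs => ?_
    rw [hν₀, withDensity_apply _ hs]
    exact nu_le hΛpos hΛle hs
  have hac : ν ≪ ν₀ := hle.absolutelyContinuous
  haveI hfinν : IsFiniteMeasure ν :=
    ⟨lt_of_le_of_lt (Measure.le_iff'.mp hle Set.univ) (measure_lt_top ν₀ _)⟩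
  set d := ν.rnDeriv ν₀ with hdd
  have hd_meas : Measurable d := Measure.measurable_rnDeriv _ _
  have hrep : ν₀.withDensity d = ν := Measure.withDensity_rnDeriv_eq ν ν₀ hac
  set w : α → ℝ≥0∞ := fun a => (‖f a‖₊ : ℝ≥0∞) * d a with hw
  have hw_meas : AEMeasurable w μ := hf_meas.mul hd_meas.aemeasurable
  have hwd : μ.withDensity w = ν := by
    rw [hw]
    have : (fun a => (‖f a‖₊ : ℝ≥0∞) * d a) = (fun a => (‖f a‖₊ : ℝ≥0∞)) * d := rfl
    rw [this, withDensity_mul₀ hf_meas hd_meas.aemeasurable, ← hν₀, hrep]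
  have hνs : ∀ s : Set α, MeasurableSet s → ν s = ∫⁻ a in s, w a ∂μ := by
    intro s hs
    rw [← hwd, withDensity_apply _ hs]
  have hwint : ∫⁻ a, w a ∂μ ≠ ⊤ := by
    rw [← setLIntegral_univ, ← hνs Set.univ MeasurableSet.univ]
    exact (measure_lt_top ν _).ne
  refine ⟨fun a => (w a).toReal, integrable_toReal_of_lintegral_ne_top hw_meas hwint,
    fun a => ENNReal.toReal_nonneg, ?_⟩
  intro s hs
  have h2 : ∫ a in s, (w a).toReal ∂μ = (∫⁻ a in s, w a ∂μ).toReal :=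
    integral_toReal hw_meas.restrict
      (ae_restrict_of_ae (ae_lt_top' hw_meas hwint))
  rw [h2, ← hνs s hs, hν, nu_apply hΛpos hΛle hs,
    ENNReal.toReal_ofReal (hΛpos _ (indL_nonneg hs))]

lemma lam_simple {h₀ : α → ℝ} (hint : Integrable h₀ μ)
    (hind : ∀ s : Set α, ∀ hs : MeasurableSet s, Λ (indL μ s hs) = ∫ a in s, h₀ a ∂μ)
    (s : SimpleFunc α ℝ) :
    ∀ u : Lp ℝ ⊤ μ, ⇑u =ᵐ[μ] ⇑s → Λ u = ∫ a, h₀ a * s a ∂μ := by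
  induction s using SimpleFunc.induction with
  | const c hms =>
    rename_i E
    intro u hu
    have hueq : u = c • indL μ E hms := by
      apply Lp.ext
      filter_upwards [hu, Lp.coeFn_smul c (indL μ E hms), indL_coe (μ := μ) hms]
        with x h1 h2 h3
      rw [h1, h2]
      simp only [Pi.smul_apply, h3, smul_eq_mul]
      by_cases hx : x ∈ E <;> simp [hx]
    rw [hueq, _root_.map_smul, hind E hms, smul_eq_mul]
    have : ∫ a, h₀ a * (SimpleFunc.piecewise E hms (SimpleFunc.const α c)
        (SimpleFunc.const α 0)) a ∂μ = ∫ a, E.indicator (fun b => h₀ b * c) a ∂μ := by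
      refine integral_congr_ae (Eventually.of_forall fun a => ?_)
      by_cases hx : a ∈ E <;> simp [hx]
    rw [this, integral_indicator hms, integral_mul_const]
    ring
  | add hdisj h1 h2 =>
    rename_i s1 s2
    intro u hu
    set u1 : Lp ℝ ⊤ μ := (SimpleFunc.memLp_top s1 μ).toLp s1 with hu1
    set u2 : Lp ℝ ⊤ μ := (SimpleFunc.memLp_top s2 μ).toLp s2 with hu2
    have he1 : ⇑u1 =ᵐ[μ] ⇑s1 := MemLp.coeFn_toLp _
    have he2 : ⇑u2 =ᵐ[μ] ⇑s2 := MemLp.coeFn_toLp _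
    have hueq : u = u1 + u2 := by
      apply Lp.ext
      filter_upwards [hu, Lp.coeFn_add u1 u2, he1, he2] with x hx h3 h4 h5
      rw [hx, h3]
      simp [h4, h5]
    have hi1 : Integrable (fun a => h₀ a * s1 a) μ := by
      have := hint.bdd_mul s1.aestronglyMeasurable (Eventually.of_forall s1.exists_forall_norm_le.choose_spec)
      refine this.congr (Eventually.of_forall fun a => mul_comm _ _)
    have hi2 : Integrable (fun a => h₀ a * s2 a) μ := by
      have := hint.bdd_mul s2.aestronglyMeasurable (Eventually.of_forall s2.exists_forall_norm_le.choose_spec)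
      refine this.congr (Eventually.of_forall fun a => mul_comm _ _)
    rw [hueq, map_add, h1 u1 he1, h2 u2 he2, ← integral_add hi1 hi2]
    refine integral_congr_ae (Eventually.of_forall fun a => ?_)
    simp [mul_add]

lemma lam_eq (hΛpos : ∀ g : Lp ℝ ⊤ μ, 0 ≤ g → 0 ≤ Λ g)
    (hΛle : ∀ g : Lp ℝ ⊤ μ, 0 ≤ g → Λ g ≤ ∫ a, f a * g a ∂μ)
    {h₀ : α → ℝ} (hint : Integrable h₀ μ)
    (hind : ∀ s : Set α, ∀ hs : MeasurableSet s, Λ (indL μ s hs) = ∫ a in s, h₀ a ∂μ)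
    (u : Lp ℝ ⊤ μ) : Λ u = ∫ a, h₀ a * u a ∂μ := by
  set C : ℝ := (eLpNorm u ⊤ μ).toReal with hC
  have hC0 : 0 ≤ C := ENNReal.toReal_nonneg
  have htop : eLpNormEssSup (⇑u) μ ≠ ⊤ := by
    rw [← eLpNorm_exponent_top]
    exact (Lp.eLpNorm_lt_top u).ne
  have hbd : ∀ᵐ x ∂μ, ‖(u : α → ℝ) x‖ ≤ C := by
    filter_upwards [enorm_ae_le_eLpNormEssSup (⇑u) μ] with x hx
    have h2 := ENNReal.toReal_mono htop hx
    simpa [hC, eLpNorm_exponent_top] using h2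
  set m : α → ℝ := (Lp.aestronglyMeasurable u).mk u with hm
  have hm_sm : StronglyMeasurable m := (Lp.aestronglyMeasurable u).stronglyMeasurable_mk
  have hm_ae : ⇑u =ᵐ[μ] m := (Lp.aestronglyMeasurable u).ae_eq_mk
  set g1 : α → ℝ := fun x => max (-C) (min (m x) C) with hg1
  have hg1_meas : Measurable g1 :=
    measurable_const.max (hm_sm.measurable.min measurable_const)
  have hg1_mem : ∀ x, g1 x ∈ Set.Icc (-C) C := fun x =>
    ⟨le_max_left _ _, max_le (by linarith) (min_le_right _ _)⟩
  have hg1_bd : ∀ x, |g1 x| ≤ C := fun x =>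
    abs_le.mpr ⟨(hg1_mem x).1, (hg1_mem x).2⟩
  have hg1_ae : g1 =ᵐ[μ] ⇑u := by
    filter_upwards [hm_ae, hbd] with x h1 h2
    rw [Real.norm_eq_abs, abs_le] at h2
    rw [hg1]
    simp only [← h1]
    rw [min_eq_left h2.2, max_eq_right h2.1]
  set sn : ℕ → SimpleFunc α ℝ := fun n =>
    SimpleFunc.approxOn g1 hg1_meas (Set.Icc (-C) C) 0
      ⟨neg_nonpos.mpr hC0, hC0⟩ n with hsn
  have hsn_mem : ∀ n x, sn n x ∈ Set.Icc (-C) C := fun n x =>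
    SimpleFunc.approxOn_mem hg1_meas _ n x
  have hsn_bd : ∀ n x, ‖sn n x‖ ≤ C := fun n x =>
    abs_le.mpr ⟨(hsn_mem n x).1, (hsn_mem n x).2⟩
  have hsn_tendsto : ∀ x, Tendsto (fun n => sn n x) atTop (𝓝 (g1 x)) := fun x =>
    SimpleFunc.tendsto_approxOn hg1_meas _ (by rw [closure_Icc]; exact hg1_mem x)
  set un : ℕ → Lp ℝ ⊤ μ := fun n =>
    (memLp_top_of_bound (sn n).aestronglyMeasurable C
      (Eventually.of_forall (hsn_bd n))).toLp (sn n) with hun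
  have hun_ae : ∀ n, ⇑(un n) =ᵐ[μ] ⇑(sn n) := fun n => MemLp.coeFn_toLp _
  have hΛn : ∀ n, Λ (un n) = ∫ a, h₀ a * sn n a ∂μ := fun n =>
    lam_simple hint hind (sn n) (un n) (hun_ae n)
  -- the integrals converge
  have hInt_tendsto : Tendsto (fun n => ∫ a, h₀ a * sn n a ∂μ) atTop
      (𝓝 (∫ a, h₀ a * g1 a ∂μ)) := by
    refine tendsto_integral_of_dominated_convergence (fun a => |h₀ a| * C) ?_ ?_ ?_ ?_
    · exact fun n => (hint.aestronglyMeasurable.mul (sn n).aestronglyMeasurable)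
    · exact hint.abs.mul_const C
    · intro n
      refine Eventually.of_forall fun a => ?_
      rw [norm_mul, Real.norm_eq_abs, Real.norm_eq_abs]
      exact mul_le_mul_of_nonneg_left (by simpa [Real.norm_eq_abs] using hsn_bd n a)
        (abs_nonneg _)
    · exact Eventually.of_forall fun a => (hsn_tendsto a).const_mul (h₀ a)
  -- Λ (un n) converges to Λ u
  have hlam_tendsto : Tendsto (fun n => Λ (un n)) atTop (𝓝 (Λ u)) := by
    rw [tendsto_iff_norm_sub_tendsto_zero]
    have key : ∀ n, ‖Λ (un n) - Λ u‖ ≤ ∫ a, f a * |g1 a - sn n a| ∂μ := by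
      intro n
      rw [Real.norm_eq_abs, abs_sub_comm, ← map_sub]
      refine (abs_apply_le_int hΛpos hΛle (u - un n)).trans (le_of_eq ?_)
      refine integral_congr_ae ?_
      filter_upwards [Lp.coeFn_sub u (un n), hg1_ae, hun_ae n] with a h1 h2 h3
      rw [h1]
      simp only [Pi.sub_apply, h3, ← h2]
    have hF : Tendsto (fun n => ∫ a, f a * |g1 a - sn n a| ∂μ) atTop (𝓝 0) := by
      have h0 : (0:ℝ) = ∫ a, (0:ℝ) ∂μ := by simp
      rw [h0]
      refine tendsto_integral_of_dominated_convergence (fun a => |f a| * (2 * C)) ?_ ?_ ?_ ?_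
      · intro n
        exact (Lp.aestronglyMeasurable f).mul
          ((hg1_meas.sub (sn n).measurable).abs.aestronglyMeasurable)
      · exact (L1.integrable_coeFn f).abs.mul_const _
      · intro n
        refine Eventually.of_forall fun a => ?_
        rw [norm_mul, Real.norm_eq_abs, Real.norm_eq_abs, abs_abs]
        refine mul_le_mul_of_nonneg_left ?_ (abs_nonneg _)
        calc |g1 a - sn n a| ≤ |g1 a| + |sn n a| := abs_sub _ _
          _ ≤ C + C := add_le_add (hg1_bd a) (by simpa [Real.norm_eq_abs] using hsn_bd n a)
          _ = 2 * C := by ring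
      · refine Eventually.of_forall fun a => ?_
        have : Tendsto (fun n => |g1 a - sn n a|) atTop (𝓝 0) := by
          have := (tendsto_const_nhds (x := g1 a) (f := atTop)).sub (hsn_tendsto a)
          simpa using this.abs
        simpa using this.const_mul (f a)
    refine squeeze_zero (fun n => norm_nonneg _) key hF
  have hlim2 : Tendsto (fun n => Λ (un n)) atTop (𝓝 (∫ a, h₀ a * g1 a ∂μ)) := by
    simp only [hΛn]
    exact hInt_tendsto
  rw [tendsto_nhds_unique hlam_tendsto hlim2]
  refine integral_congr_ae ?_
  filter_upwards [hg1_ae] with a ha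
  rw [ha]

end L1Ideal

/-- **`L¹` is an order ideal in `(L^∞)*`.** On a semi-finite measure space, if a
functional `Λ ∈ (L^∞(μ))*` satisfies `0 ≤ Λ ≤ f` for some `f ∈ L¹(μ)` (in the order
of `(L^∞)*`, where `f` acts by integration), then `Λ` is itself represented by an
`L¹` function. -/
theorem l1_ideal_in_dual_linfty
    {α : Type*} [MeasurableSpace α] (μ : Measure α) (hμ : SemiFinite μ)
    (Λ : Lp ℝ ⊤ μ →L[ℝ] ℝ) (f : Lp ℝ 1 μ)
    (hΛpos : ∀ g : Lp ℝ ⊤ μ, 0 ≤ g → 0 ≤ Λ g)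
    (hΛle : ∀ g : Lp ℝ ⊤ μ, 0 ≤ g → Λ g ≤ ∫ a, f a * g a ∂μ) :
    ∃ h : Lp ℝ 1 μ, ∀ g : Lp ℝ ⊤ μ, Λ g = ∫ a, h a * g a ∂μ := by
  obtain ⟨h₀, hint, hpos, hind⟩ := L1Ideal.exists_density hΛpos hΛle
  refine ⟨(memLp_one_iff_integrable.mpr hint).toLp h₀, fun g => ?_⟩
  rw [L1Ideal.lam_eq hΛpos hΛle hint hind g]
  refine integral_congr_ae ?_
  filter_upwards [MemLp.coeFn_toLp (memLp_one_iff_integrable.mpr hint)] with a ha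
  rw [ha]
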